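/- Let n ≥ 2 and let α₁,…,α_g, β₁,…,β_g be elements of F_n. Let h : F → F be the endomorphism determined by h(x_i) = x_i·α_i and h(y_i) = y_i·β_i for 1 ≤ i ≤ g. Then h(ω_g) ≡ ω_g · ∏_{i=1}^g [α_i, y_i]·[x_i, β_i] modulo F_{n+2}. -/

import Mathlib

open scoped commutatorElement

/-!
`Fg g` is the free group `F` on `2g` generators `x₁,…,x_g,y₁,…,y_g`
(`X g i = x_i`, `Y g i = y_i`), `omegaG g = [x₁,y₁]⋯[x_g,y_g]`.
Paper convention: `F_k = lowerCentralSeries (Fg g) (k-1)`, and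
`Q g k = F/F_k`.  `IsA0 g k φ` says that the automorphism `φ` of `F/F_k`
lies in `A₀(F/F_k)`: some endomorphism of `F` lifting `φ` sends `ω_g`
into `ω_g·F_{k+1}`.
-/

abbrev Fg (g : ℕ) := FreeGroup (Fin g × Bool)

def X (g : ℕ) (i : Fin g) : Fg g := FreeGroup.of (i, false)

def Y (g : ℕ) (i : Fin g) : Fg g := FreeGroup.of (i, true)

def omegaG (g : ℕ) : Fg g := ((List.finRange g).map fun i => ⁅X g i, Y g i⁆).prod

/-- `F/F_k` in the paper's indexing of the lower central series. -/
abbrev Q (g k : ℕ) := Fg g ⧸ Subgroup.lowerCentralSeries (⊤ : Subgroup (Fg g)) (k - 1)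

def mkQ (g k : ℕ) : Fg g →* Q g k := QuotientGroup.mk' _

/-- Membership in `A₀(F/F_k)`. -/
def IsA0 (g k : ℕ) (φ : MulAut (Q g k)) : Prop :=
  ∃ h : Fg g →* Fg g,
    (∀ a : Fg g, mkQ g k (h a) = φ (mkQ g k a)) ∧
    (omegaG g)⁻¹ * h (omegaG g) ∈ Subgroup.lowerCentralSeries (⊤ : Subgroup (Fg g)) k

/-- The natural projection `F/F_{k+1} → F/F_k`. -/
def projQ (g k : ℕ) : Q g (k + 1) →* Q g k :=
  QuotientGroup.map _ _ (MonoidHom.id _)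
    (fun x hx => Subgroup.lowerCentralSeries_antitone ⊤ (Nat.sub_le k 1) hx)

section Helpers
open Subgroup

lemma three_subgroups_rel {G : Type*} [Group G] {H₁ H₂ H₃ N : Subgroup G} [N.Normal]
    (h1 : ⁅⁅H₂, H₃⁆, H₁⁆ ≤ N) (h2 : ⁅⁅H₃, H₁⁆, H₂⁆ ≤ N) : ⁅⁅H₁, H₂⁆, H₃⁆ ≤ N := by
  let π := QuotientGroup.mk' N
  have hker : ∀ K : Subgroup G, K.map π = ⊥ ↔ K ≤ N := by
    intro K
    rw [Subgroup.map_eq_bot_iff, QuotientGroup.ker_mk']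
  have key : ⁅⁅H₁.map π, H₂.map π⁆, H₃.map π⁆ = ⊥ := by
    apply commutator_commutator_eq_bot_of_rotate <;>
      rw [← map_commutator, ← map_commutator, hker]
    · exact h1
    · exact h2
  rw [← map_commutator, ← map_commutator, hker] at key
  exact key

lemma lcs_comm_le (G : Type*) [Group G] : ∀ (k m : ℕ),
    ⁅Subgroup.lowerCentralSeries (⊤ : Subgroup G) m, Subgroup.lowerCentralSeries (⊤ : Subgroup G) k⁆ ≤ Subgroup.lowerCentralSeries (⊤ : Subgroup G) (m + k + 1)
  | 0, m => by
      rw [Subgroup.lowerCentralSeries_zero]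
      exact le_of_eq (Subgroup.lowerCentralSeries_succ ⊤ m).symm
  | (k+1), m => by
      have hsucc : Subgroup.lowerCentralSeries (⊤ : Subgroup G) (k+1) = ⁅Subgroup.lowerCentralSeries (⊤ : Subgroup G) k, ⊤⁆ :=
        Subgroup.lowerCentralSeries_succ ⊤ k
      rw [hsucc, commutator_comm]
      apply three_subgroups_rel
      · -- ⁅⁅⊤, LCS m⁆, LCS k⁆ ≤ LCS (m + (k+1) + 1)
        rw [commutator_comm (⊤ : Subgroup G)]
        have hm : ⁅Subgroup.lowerCentralSeries (⊤ : Subgroup G) m, (⊤ : Subgroup G)⁆ = Subgroup.lowerCentralSeries (⊤ : Subgroup G) (m+1) := rfl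
        rw [hm]
        have := lcs_comm_le G k (m + 1)
        have harith : m + 1 + k + 1 = m + (k + 1) + 1 := by omega
        rwa [harith] at this
      · -- ⁅⁅LCS m, LCS k⁆, ⊤⁆ ≤ LCS (m + (k+1) + 1)
        calc ⁅⁅Subgroup.lowerCentralSeries (⊤ : Subgroup G) m, Subgroup.lowerCentralSeries (⊤ : Subgroup G) k⁆, ⊤⁆
            ≤ ⁅Subgroup.lowerCentralSeries (⊤ : Subgroup G) (m + k + 1), ⊤⁆ :=
              commutator_mono (lcs_comm_le G k m) le_rfl
          _ = Subgroup.lowerCentralSeries (⊤ : Subgroup G) (m + k + 1 + 1) := (Subgroup.lowerCentralSeries_succ ⊤ _).symm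
          _ = Subgroup.lowerCentralSeries (⊤ : Subgroup G) (m + (k+1) + 1) := by ring_nf

lemma central_in_quot {G : Type*} [Group G] {n : ℕ} {z : G}
    (hz : z ∈ Subgroup.lowerCentralSeries (⊤ : Subgroup G) n)
    (w : G ⧸ Subgroup.lowerCentralSeries (⊤ : Subgroup G) (n+1)) :
    Commute ((z : G ⧸ Subgroup.lowerCentralSeries (⊤ : Subgroup G) (n+1))) w := by
  induction w using QuotientGroup.induction_on with
  | H u =>
    apply commutatorElement_eq_one_iff_mul_comm.mp
    have : ⁅z, u⁆ ∈ Subgroup.lowerCentralSeries (⊤ : Subgroup G) (n+1) := by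
      rw [Subgroup.lowerCentralSeries_succ]
      exact commutator_mem_commutator hz (mem_top u)
    calc ⁅(z : G ⧸ Subgroup.lowerCentralSeries (⊤ : Subgroup G) (n+1)), (u : G ⧸ _)⁆
        = ((⁅z, u⁆ : G) : G ⧸ Subgroup.lowerCentralSeries (⊤ : Subgroup G) (n+1)) := rfl
      _ = 1 := (QuotientGroup.eq_one_iff _).mpr this

lemma key_comm_identity {H : Type*} [Group H] (x y a b c d : H)
    (hc : ∀ w, Commute c w) (hd : ∀ w, Commute d w)
    (h1 : a * y = c * (y * a))
    (h2 : b * x⁻¹ = x⁻¹ * (d * b))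
    (h3 : b * a⁻¹ = a⁻¹ * b) :
    ⁅x * a, y * b⁆ = ⁅x, y⁆ * (c * d) := by
  calc ⁅x * a, y * b⁆
      = x * (a * y) * (b * a⁻¹) * x⁻¹ * b⁻¹ * y⁻¹ := by group
    _ = x * (c * (y * a)) * (a⁻¹ * b) * x⁻¹ * b⁻¹ * y⁻¹ := by rw [h1, h3]
    _ = x * c * (y * (b * x⁻¹) * b⁻¹ * y⁻¹) := by group
    _ = x * c * (y * (x⁻¹ * (d * b)) * b⁻¹ * y⁻¹) := by rw [h2]
    _ = c * x * (y * (x⁻¹ * (d * b)) * b⁻¹ * y⁻¹) := by rw [(hc x).eq]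
    _ = c * (x * y * x⁻¹ * (d * y⁻¹)) := by group
    _ = c * (x * y * x⁻¹ * (y⁻¹ * d)) := by rw [(hd y⁻¹).eq]
    _ = c * ⁅x, y⁆ * d := by group
    _ = ⁅x, y⁆ * c * d := by rw [(hc ⁅x, y⁆).eq]
    _ = ⁅x, y⁆ * (c * d) := by group

lemma list_prod_mul_central {H : Type*} [Group H] {ι : Type*} (l : List ι)
    (e z : ι → H) (hz : ∀ i w, Commute (z i) w) :
    (l.map fun i => e i * z i).prod = (l.map e).prod * (l.map z).prod := by
  induction l with
  | nil => simp
  | cons a t ih =>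
    simp only [List.map_cons, List.prod_cons, ih]
    rw [mul_assoc (e a) (z a), ← mul_assoc (z a), (hz a ((t.map e).prod)).eq]
    group

end Helpers

open Subgroup

/-- if `h(x_i) = x_i·α_i` and `h(y_i) = y_i·β_i` with `α_i, β_i ∈ F_n`,
then `h(ω_g) ≡ ω_g · ∏_i [α_i,y_i]·[x_i,β_i]` modulo `F_{n+2}`. -/
theorem endo_omega_congruence (g n : ℕ) (hg : 1 ≤ g) (hn : 2 ≤ n)
    (α β : Fin g → Fg g)
    (hα : ∀ i, α i ∈ Subgroup.lowerCentralSeries (⊤ : Subgroup (Fg g)) (n - 1))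
    (hβ : ∀ i, β i ∈ Subgroup.lowerCentralSeries (⊤ : Subgroup (Fg g)) (n - 1))
    (h : Fg g →* Fg g)
    (hx : ∀ i, h (X g i) = X g i * α i)
    (hy : ∀ i, h (Y g i) = Y g i * β i) :
    (omegaG g * ((List.finRange g).map fun i => ⁅α i, Y g i⁆ * ⁅X g i, β i⁆).prod)⁻¹ *
      h (omegaG g) ∈ Subgroup.lowerCentralSeries (⊤ : Subgroup (Fg g)) (n + 1) := by
  set N := Subgroup.lowerCentralSeries (⊤ : Subgroup (Fg g)) (n + 1) with hNdef
  set π : Fg g →* Fg g ⧸ N := QuotientGroup.mk' N with hπdef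
  have e1 : Subgroup.lowerCentralSeries (⊤ : Subgroup (Fg g)) (n - 1 + 1)
      = ⁅Subgroup.lowerCentralSeries (⊤ : Subgroup (Fg g)) (n - 1), ⊤⁆ := rfl
  have en : n - 1 + 1 = n := by omega
  have hayN : ∀ i, ⁅α i, Y g i⁆ ∈ Subgroup.lowerCentralSeries (⊤ : Subgroup (Fg g)) n := by
    intro i
    have : ⁅α i, Y g i⁆ ∈ Subgroup.lowerCentralSeries (⊤ : Subgroup (Fg g)) (n - 1 + 1) := by
      rw [e1]; exact commutator_mem_commutator (hα i) (mem_top _)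
    rwa [en] at this
  have hxbN : ∀ i, ⁅X g i, β i⁆ ∈ Subgroup.lowerCentralSeries (⊤ : Subgroup (Fg g)) n := by
    intro i
    have h2 : ⁅X g i, β i⁆ ∈ ⁅(⊤ : Subgroup (Fg g)), Subgroup.lowerCentralSeries (⊤ : Subgroup (Fg g)) (n - 1)⁆ :=
      commutator_mem_commutator (mem_top _) (hβ i)
    rw [commutator_comm, ← e1, en] at h2
    exact h2
  have habN : ∀ i, ⁅α i, β i⁆ ∈ N := by
    intro i
    refine Subgroup.lowerCentralSeries_antitone ⊤ (show n + 1 ≤ (n - 1) + (n - 1) + 1 by omega) ?_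
    exact lcs_comm_le (Fg g) (n - 1) (n - 1) (commutator_mem_commutator (hα i) (hβ i))
  have hcent : ∀ {z : Fg g}, z ∈ Subgroup.lowerCentralSeries (⊤ : Subgroup (Fg g)) n →
      ∀ w : Fg g ⧸ N, Commute (π z) w := fun hz w => central_in_quot hz w
  have main : ∀ i, π (h ⁅X g i, Y g i⁆)
      = π ⁅X g i, Y g i⁆ * π (⁅α i, Y g i⁆ * ⁅X g i, β i⁆) := by
    intro i
    rw [map_commutatorElement, hx i, hy i, map_commutatorElement, map_mul, map_mul,
      map_mul, map_commutatorElement, map_commutatorElement]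
    have hc : ∀ w, Commute ⁅π (α i), π (Y g i)⁆ w := by
      intro w; rw [← map_commutatorElement]; exact hcent (hayN i) w
    have hd : ∀ w, Commute ⁅π (X g i), π (β i)⁆ w := by
      intro w; rw [← map_commutatorElement]; exact hcent (hxbN i) w
    have hab : Commute (π (α i)) (π (β i)) := by
      apply commutatorElement_eq_one_iff_mul_comm.mp
      rw [← map_commutatorElement]
      exact (QuotientGroup.eq_one_iff _).mpr (habN i)
    have h1' : π (α i) * π (Y g i)
        = ⁅π (α i), π (Y g i)⁆ * (π (Y g i) * π (α i)) := by group
    have h2' : π (β i) * (π (X g i))⁻¹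
        = (π (X g i))⁻¹ * (⁅π (X g i), π (β i)⁆ * π (β i)) := by group
    exact key_comm_identity _ _ _ _ _ _ hc hd h1' h2' hab.symm.inv_right.eq
  refine (QuotientGroup.eq_one_iff _).mp ?_
  show π ((omegaG g * ((List.finRange g).map fun i => ⁅α i, Y g i⁆ * ⁅X g i, β i⁆).prod)⁻¹ *
      h (omegaG g)) = 1
  rw [map_mul, map_inv, inv_mul_eq_one, map_mul]
  have hLHS : π (h (omegaG g))
      = ((List.finRange g).map fun i => π (h ⁅X g i, Y g i⁆)).prod := by
    rw [omegaG, ← MonoidHom.comp_apply, map_list_prod, List.map_map]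
    rfl
  have hRHS : π ((List.finRange g).map fun i => ⁅α i, Y g i⁆ * ⁅X g i, β i⁆).prod
      = ((List.finRange g).map fun i => π (⁅α i, Y g i⁆ * ⁅X g i, β i⁆)).prod := by
    rw [map_list_prod, List.map_map]; rfl
  have hW : π (omegaG g) = ((List.finRange g).map fun i => π ⁅X g i, Y g i⁆).prod := by
    rw [omegaG, map_list_prod, List.map_map]; rfl
  rw [hLHS, hRHS, hW]
  simp only [main]
  rw [list_prod_mul_central (List.finRange g) (fun i => π ⁅X g i, Y g i⁆)
    (fun i => π (⁅α i, Y g i⁆ * ⁅X g i, β i⁆))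
    (fun i w => by
      show Commute (π (⁅α i, Y g i⁆ * ⁅X g i, β i⁆)) w
      rw [map_mul]
      exact Commute.mul_left (hcent (hayN i) w) (hcent (hxbN i) w))]
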